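/- For k ≥ 3, every strictly balanced word w of length 2k over {a,b} with w ∉ {a^k b^k, b^k a^k} satisfies |ScatFact_k(w)| ≥ k + 3. -/

import Mathlib

def wa : Bool := false
def wb : Bool := true

/-- The set of scattered factors (subsequences) of `w` of length exactly `k`. -/
def ScatFact (k : ℕ) (w : List Bool) : Finset (List Bool) :=
  (w.sublists.filter (fun u => u.length = k)).toFinset

lemma mem_scatfact {k : ℕ} {w u : List Bool} :
    u ∈ ScatFact k w ↔ u.Sublist w ∧ u.length = k := by
  simp [ScatFact, List.mem_filter, List.mem_sublists]

lemma bool_third {c d e : Bool} (hcd : c ≠ d) (he : e ≠ c) : e = d := by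
  cases c <;> cases d <;> cases e <;> simp_all

lemma count_cd {c d : Bool} (hcd : c ≠ d) (u : List Bool) :
    u.count c + u.count d = u.length := by
  induction u with
  | nil => simp
  | cons e t ih =>
    rcases eq_or_ne e c with rfl | he
    · rw [List.count_cons_self, List.count_cons_of_ne hcd]
      simp; omega
    · rw [List.count_cons_of_ne he,
        bool_third hcd he, List.count_cons_self]
      simp; omega

lemma all_d_of_count_c_zero {c d : Bool} (hcd : c ≠ d) {y : List Bool}
    (h : y.count c = 0) : y = List.replicate (y.count d) d := by
  induction y with
  | nil => simp
  | cons e t ih =>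
    have he : e ≠ c := by
      intro h'; subst h'; rw [List.count_cons_self] at h; omega
    have hed := bool_third hcd he
    subst hed
    rw [List.count_cons_of_ne he] at h
    rw [List.count_cons_self, List.replicate_succ]
    exact congrArg _ (ih h)

lemma exists_first_split {c d : Bool} (hcd : c ≠ d) {w : List Bool} (hd : d ∈ w) :
    ∃ p y, w = List.replicate p c ++ d :: y := by
  induction w with
  | nil => simp at hd
  | cons e t ih =>
    rcases eq_or_ne e d with rfl | he
    · exact ⟨0, t, by simp⟩
    · have hec : e = c := bool_third hcd.symm he
      have hd' : d ∈ t := by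
        rcases List.mem_cons.mp hd with h | h
        · exact absurd h.symm he
        · exact h
      obtain ⟨p, y, h⟩ := ih hd'
      exact ⟨p + 1, y, by rw [List.replicate_succ, hec]; simp [h]⟩

lemma exists_last_split {c d : Bool} (hcd : c ≠ d) {w : List Bool} (hd : d ∈ w) :
    ∃ x r, w = x ++ d :: List.replicate r c := by
  obtain ⟨p, y, h⟩ := exists_first_split hcd (List.mem_reverse.mpr hd)
  refine ⟨y.reverse, p, ?_⟩
  have h2 := congrArg List.reverse h
  rw [List.reverse_reverse] at h2
  rw [h2]
  simp [List.reverse_replicate]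

lemma X_sublist {c d : Bool} {x y : List Bool} {i m : ℕ}
    (h1 : i ≤ x.count c) (h2 : m - i ≤ y.count c) :
    (List.replicate i c ++ d :: List.replicate (m - i) c).Sublist (x ++ d :: y) :=
  List.Sublist.append (List.replicate_sublist_iff.mpr h1)
    (List.Sublist.cons₂ d (List.replicate_sublist_iff.mpr h2))

lemma repl_ne {c d : Bool} (hcd : c ≠ d) :
    ∀ (i1 i2 : ℕ), i1 < i2 → ∀ (r1 r2 : List Bool),
    List.replicate i1 c ++ d :: r1 ≠ List.replicate i2 c ++ d :: r2 := by
  intro i1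
  induction i1 with
  | zero =>
    intro i2 h r1 r2 heq
    match i2, h with
    | m + 1, _ =>
      rw [List.replicate_succ] at heq
      simp only [List.replicate_zero, List.nil_append, List.cons_append,
        List.cons.injEq] at heq
      exact hcd heq.1.symm
  | succ n ih =>
    intro i2 h r1 r2 heq
    match i2, h with
    | m + 1, h =>
      rw [List.replicate_succ, List.replicate_succ] at heq
      simp only [List.cons_append, List.cons.injEq, true_and] at heq
      exact ih m (by omega) r1 r2 heq

lemma exists_pair (k : ℕ) (hk : 3 ≤ k) (c d : Bool) (hcd : c ≠ d) (w : List Bool)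
    (hc : w.count c = k) (hd : w.count d = k)
    (h1 : w ≠ List.replicate k c ++ List.replicate k d)
    (h2 : w ≠ List.replicate k d ++ List.replicate k c) :
    ∃ i1 i2, i1 < i2 ∧ i2 ≤ k - 1 ∧
      (List.replicate i1 c ++ d :: List.replicate (k - 1 - i1) c).Sublist w ∧
      (List.replicate i2 c ++ d :: List.replicate (k - 1 - i2) c).Sublist w := by
  have hdw : d ∈ w := List.count_pos_iff.mp (by omega)
  obtain ⟨p, y, hw⟩ := exists_first_split hcd hdw
  have hcy : p + y.count c = k := by
    rw [hw] at hc
    rw [List.count_append, List.count_cons_of_ne hcd.symm, List.count_replicate_self] at hc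
    exact hc
  by_cases hpk : p = k
  · -- w = c^k d^k, contradiction
    exfalso
    apply h1
    have hy0 : y.count c = 0 := by omega
    have hdy : y.count d = k - 1 := by
      have hrep : List.count d (List.replicate p c) = 0 := by
        rw [List.count_replicate]
        simp [hcd]
      rw [hw, List.count_append, List.count_cons_self, hrep] at hd
      omega
    have hy : y = List.replicate (k - 1) d := by
      have := all_d_of_count_c_zero hcd hy0
      rwa [hdy] at this
    rw [hw, hpk, hy]
    have : d :: List.replicate (k - 1) d = List.replicate k d := by
      rw [← List.replicate_succ]
      congr 1
      omega
    rw [this]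
  by_cases hp1 : 1 ≤ p
  · refine ⟨p - 1, p, by omega, by omega, ?_, ?_⟩
    · rw [hw]
      exact X_sublist (by rw [List.count_replicate_self]; omega)
        (by omega)
    · rw [hw]
      exact X_sublist (by rw [List.count_replicate_self]) (by omega)
  -- p = 0
  have hp0 : p = 0 := by omega
  obtain ⟨x, r, hw'⟩ := exists_last_split hcd hdw
  have hcx : x.count c + r = k := by
    rw [hw'] at hc
    rw [List.count_append, List.count_cons_of_ne hcd.symm, List.count_replicate_self] at hc
    exact hc
  by_cases hrk : r = k
  · exfalso
    apply h2
    have hx0 : x.count c = 0 := by omega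
    have hdx : x.count d = k - 1 := by
      have hrep : List.count d (List.replicate r c) = 0 := by
        rw [List.count_replicate]
        simp [hcd]
      rw [hw', List.count_append, List.count_cons_self, hrep] at hd
      omega
    have hx : x = List.replicate (k - 1) d := by
      have := all_d_of_count_c_zero hcd hx0
      rwa [hdx] at this
    rw [hw', hrk, hx]
    rw [show List.replicate k d = List.replicate (k - 1) d ++ [d] by
      rw [← List.replicate_succ']
      congr 1
      omega]
    simp
  by_cases hr1 : 1 ≤ r
  · refine ⟨k - 1 - r, k - r, by omega, by omega, ?_, ?_⟩
    · rw [hw']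
      exact X_sublist (by omega) (by rw [List.count_replicate_self]; omega)
    · rw [hw']
      exact X_sublist (by omega) (by rw [List.count_replicate_self]; omega)
  -- p = 0, r = 0
  refine ⟨0, k - 1, by omega, le_refl _, ?_, ?_⟩
  · rw [hw, hp0]
    exact X_sublist (by simp) (by omega)
  · rw [hw']
    exact X_sublist (by omega) (by rw [List.count_replicate_self]; omega)

lemma exists_count_sublist {c d : Bool} (hcd : c ≠ d) :
    ∀ (w : List Bool) (i j : ℕ), i ≤ w.count c → j ≤ w.count d →
    ∃ u : List Bool, u.Sublist w ∧ u.count c = i ∧ u.count d = j := by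
  intro w
  induction w with
  | nil =>
    intro i j hi hj
    simp only [List.count_nil, Nat.le_zero] at hi hj
    exact ⟨[], List.Sublist.refl _, by simp [hi, hj]⟩
  | cons e t ih =>
    intro i j hi hj
    rcases eq_or_ne e c with he | he
    · rw [he, List.count_cons_self] at hi
      rw [he, List.count_cons_of_ne hcd] at hj
      rw [he]
      match i with
      | 0 =>
        obtain ⟨u, hu, h1, h2⟩ := ih 0 j (Nat.zero_le _) hj
        exact ⟨u, hu.cons _, h1, h2⟩
      | i + 1 =>
        obtain ⟨u, hu, h1, h2⟩ := ih i j (by omega) hj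
        refine ⟨c :: u, hu.cons₂ _, ?_, ?_⟩
        · rw [List.count_cons_self, h1]
        · rw [List.count_cons_of_ne hcd, h2]
    · have hed : e = d := bool_third hcd he
      rw [hed, List.count_cons_of_ne hcd.symm] at hi
      rw [hed, List.count_cons_self] at hj
      rw [hed]
      match j with
      | 0 =>
        obtain ⟨u, hu, h1, h2⟩ := ih i 0 hi (Nat.zero_le _)
        exact ⟨u, hu.cons _, h1, h2⟩
      | j + 1 =>
        obtain ⟨u, hu, h1, h2⟩ := ih i j hi (by omega)
        refine ⟨d :: u, hu.cons₂ _, ?_, ?_⟩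
        · rw [List.count_cons_of_ne hcd.symm, h1]
        · rw [List.count_cons_self, h2]

theorem scatfact_card_ge (k : ℕ) (hk : 3 ≤ k) (w : List Bool)
    (hlen : w.length = 2 * k) (ha : w.count wa = k) (hb : w.count wb = k)
    (h1 : w ≠ List.replicate k wa ++ List.replicate k wb)
    (h2 : w ≠ List.replicate k wb ++ List.replicate k wa) :
    k + 3 ≤ (ScatFact k w).card := by
  have hab : wa ≠ wb := by decide
  obtain ⟨i1, i2, hi12, hi2, hX1, hX2⟩ := exists_pair k hk wa wb hab w ha hb h1 h2
  obtain ⟨j1, j2, hj12, hj2, hY1, hY2⟩ := exists_pair k hk wb wa hab.symm w hb ha h2 h1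
  set S := ScatFact k w with hS
  classical
  set A := S.filter (fun u => u.count wb = 1) with hA
  set B := S.filter (fun u => u.count wb = k - 1) with hB
  set C := S.filter (fun u => u.count wb ≠ 1 ∧ u.count wb ≠ k - 1) with hC
  -- membership helpers
  have hXmem : ∀ i, i ≤ k - 1 →
      (List.replicate i wa ++ wb :: List.replicate (k - 1 - i) wa).Sublist w →
      (List.replicate i wa ++ wb :: List.replicate (k - 1 - i) wa) ∈ A := by
    intro i hi hsub
    rw [hA, Finset.mem_filter]
    constructor
    · rw [mem_scatfact]
      refine ⟨hsub, ?_⟩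
      simp only [List.length_append, List.length_cons, List.length_replicate]
      omega
    · simp only [List.count_append, List.count_cons_self, List.count_replicate]
      simp [wa, wb]
  have hYmem : ∀ j, j ≤ k - 1 →
      (List.replicate j wb ++ wa :: List.replicate (k - 1 - j) wb).Sublist w →
      (List.replicate j wb ++ wa :: List.replicate (k - 1 - j) wb) ∈ B := by
    intro j hj hsub
    rw [hB, Finset.mem_filter]
    constructor
    · rw [mem_scatfact]
      refine ⟨hsub, ?_⟩
      simp only [List.length_append, List.length_cons, List.length_replicate]
      omega
    · simp only [List.count_append, List.count_cons_of_ne hab.symm,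
        List.count_replicate]
      simp [wa, wb]
      omega
  -- card A ≥ 2
  have hcardA : 2 ≤ A.card := by
    have hne : (List.replicate i1 wa ++ wb :: List.replicate (k - 1 - i1) wa) ≠
        (List.replicate i2 wa ++ wb :: List.replicate (k - 1 - i2) wa) :=
      repl_ne hab i1 i2 hi12 _ _
    have : ({(List.replicate i1 wa ++ wb :: List.replicate (k - 1 - i1) wa),
        (List.replicate i2 wa ++ wb :: List.replicate (k - 1 - i2) wa)} :
        Finset (List Bool)) ⊆ A := by
      intro u hu
      rcases Finset.mem_insert.mp hu with rfl | hu
      · exact hXmem i1 (by omega) hX1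
      · rw [Finset.mem_singleton.mp hu]
        exact hXmem i2 hi2 hX2
    calc 2 = ({(List.replicate i1 wa ++ wb :: List.replicate (k - 1 - i1) wa),
        (List.replicate i2 wa ++ wb :: List.replicate (k - 1 - i2) wa)} :
        Finset (List Bool)).card := (Finset.card_pair hne).symm
      _ ≤ A.card := Finset.card_le_card this
  have hcardB : 2 ≤ B.card := by
    have hne : (List.replicate j1 wb ++ wa :: List.replicate (k - 1 - j1) wb) ≠
        (List.replicate j2 wb ++ wa :: List.replicate (k - 1 - j2) wb) :=
      repl_ne hab.symm j1 j2 hj12 _ _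
    have : ({(List.replicate j1 wb ++ wa :: List.replicate (k - 1 - j1) wb),
        (List.replicate j2 wb ++ wa :: List.replicate (k - 1 - j2) wb)} :
        Finset (List Bool)) ⊆ B := by
      intro u hu
      rcases Finset.mem_insert.mp hu with rfl | hu
      · exact hYmem j1 (by omega) hY1
      · rw [Finset.mem_singleton.mp hu]
        exact hYmem j2 hj2 hY2
    calc 2 = _ := (Finset.card_pair hne).symm
      _ ≤ B.card := Finset.card_le_card this
  -- card C ≥ k - 1
  have hcardC : k - 1 ≤ C.card := by
    have hsubJ : (((Finset.range (k + 1)).erase 1).erase (k - 1)) ⊆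
        C.image (fun u => u.count wb) := by
      intro j hj
      simp only [Finset.mem_erase, Finset.mem_range] at hj
      obtain ⟨hjk1, hj1, hjr⟩ := hj
      obtain ⟨u, hu, huc, hud⟩ := exists_count_sublist hab w (k - j) j
        (by omega) (by omega)
      have hulen : u.length = k := by
        have := count_cd hab u
        omega
      rw [Finset.mem_image]
      refine ⟨u, ?_, hud⟩
      rw [hC, Finset.mem_filter, mem_scatfact]
      exact ⟨⟨hu, hulen⟩, by rw [hud]; exact ⟨hj1, hjk1⟩⟩
    have h1' : (((Finset.range (k + 1)).erase 1).erase (k - 1)).card = k - 1 := by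
      rw [Finset.card_erase_of_mem, Finset.card_erase_of_mem, Finset.card_range]
      · omega
      · simp only [Finset.mem_range]; omega
      · rw [Finset.mem_erase]
        constructor
        · omega
        · simp only [Finset.mem_range]; omega
    calc k - 1 = _ := h1'.symm
      _ ≤ (C.image (fun u => u.count wb)).card := Finset.card_le_card hsubJ
      _ ≤ C.card := Finset.card_image_le
  -- combine
  have hdAB : Disjoint A B := by
    rw [Finset.disjoint_left]
    intro u huA huB
    rw [hA, Finset.mem_filter] at huA
    rw [hB, Finset.mem_filter] at huB
    omega
  have hdABC : Disjoint (A ∪ B) C := by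
    rw [Finset.disjoint_left]
    intro u hu huC
    rw [hC, Finset.mem_filter] at huC
    rcases Finset.mem_union.mp hu with h | h
    · rw [hA, Finset.mem_filter] at h; exact huC.2.1 h.2
    · rw [hB, Finset.mem_filter] at h; exact huC.2.2 h.2
  have hsub : A ∪ B ∪ C ⊆ S := by
    intro u hu
    rcases Finset.mem_union.mp hu with h | h
    · rcases Finset.mem_union.mp h with h | h
      · exact Finset.mem_of_mem_filter u h
      · exact Finset.mem_of_mem_filter u h
    · exact Finset.mem_of_mem_filter u h
  calc k + 3 ≤ A.card + B.card + C.card := by omega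
    _ = (A ∪ B ∪ C).card := by
        rw [Finset.card_union_of_disjoint hdABC, Finset.card_union_of_disjoint hdAB]
    _ ≤ S.card := Finset.card_le_card hsub
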